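/- Let (R, m) be a regular local ring of dimension r with regular system of parameters x_1, …, x_r, and let M be a finitely generated R-module. If x_1, …, x_r is an M-regular sequence, then M is flat (equivalently, free) over R. -/

import Mathlib

open RingTheory.Sequence IsLocalRing Submodule Function
open scoped TensorProduct

section Lift

open scoped Pointwise

variable {R : Type*} [CommRing R] [IsNoetherianRing R] [IsLocalRing R]
  {M : Type*} [AddCommGroup M] [Module R M] [Module.Finite R M]

lemma free_lift (a : R) (ha : a ∈ maximalIdeal R) (hreg : IsSMulRegular M a)
    [Module.Finite (R ⧸ Ideal.span {a}) (QuotSMulTop a M)]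
    [Module.Free (R ⧸ Ideal.span {a}) (QuotSMulTop a M)] :
    Module.Free R M := by
  set I : Ideal R := Ideal.span {a} with hI
  have mk_smul : ∀ (c : R) (y : QuotSMulTop a M),
      Ideal.Quotient.mk I c • y = c • y :=
    fun c y => Module.IsTorsionBy.mk_smul (Module.isTorsionBy_quotient_element_smul M a) c y
  set ι := Module.Free.ChooseBasisIndex (R ⧸ I) (QuotSMulTop a M) with hι
  let b' : Module.Basis ι (R ⧸ I) (QuotSMulTop a M) := Module.Free.chooseBasis _ _
  choose b hb using fun i => Submodule.Quotient.mk_surjective (a • (⊤ : Submodule R M)) (b' i)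
  have hsmul_top : a • (⊤ : Submodule R M) ≤ maximalIdeal R • ⊤ := by
    rw [← Submodule.ideal_span_singleton_smul]
    exact Submodule.smul_mono_left ((Ideal.span_le).mpr (Set.singleton_subset_iff.mpr ha))
  -- surjectivity
  have hspan : Submodule.span R (Set.range b) = ⊤ := by
    rw [← top_le_iff]
    apply Submodule.le_of_le_smul_of_le_jacobson_bot (Module.finite_def.mp ‹_›)
      (IsLocalRing.jacobson_eq_maximalIdeal ⊥ bot_ne_top).ge
    intro m _
    set y : QuotSMulTop a M := Submodule.Quotient.mk m with hy
    choose c hc using fun i => Ideal.Quotient.mk_surjective (b'.repr y i)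
    set z : M := ∑ i, c i • b i with hz
    have hmkz : Submodule.Quotient.mk (p := a • (⊤ : Submodule R M)) z = y := by
      have : Submodule.Quotient.mk (p := a • (⊤ : Submodule R M)) z
          = Submodule.mkQ _ z := rfl
      rw [this, hz, map_sum]
      have : ∀ i, Submodule.mkQ (a • (⊤ : Submodule R M)) (c i • b i)
          = b'.repr y i • b' i := by
        intro i
        rw [map_smul, Submodule.mkQ_apply, hb, ← hc, mk_smul]
      simp_rw [this]
      exact b'.sum_repr y
    have hz_mem : z ∈ Submodule.span R (Set.range b) :=
      Submodule.sum_mem _ fun i _ =>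
        Submodule.smul_mem _ _ (Submodule.subset_span ⟨i, rfl⟩)
    have hmz : m - z ∈ maximalIdeal R • (⊤ : Submodule R M) := by
      apply hsmul_top
      rw [← Submodule.Quotient.mk_eq_zero, Submodule.Quotient.mk_sub, hmkz, hy, sub_self]
    have : m = z + (m - z) := by abel
    rw [this]
    exact Submodule.add_mem_sup hz_mem hmz
  let f : (ι → R) →ₗ[R] M := Fintype.linearCombination R b
  have hsurj : Function.Surjective f := by
    rw [← LinearMap.range_eq_top, Fintype.range_linearCombination, hspan]
  -- injectivity
  have hker : LinearMap.ker f = ⊥ := by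
    apply Submodule.eq_bot_of_le_smul_of_le_jacobson_bot (maximalIdeal R) _
      (IsNoetherian.noetherian _) _
      (IsLocalRing.jacobson_eq_maximalIdeal ⊥ bot_ne_top).ge
    intro c hc
    have h0 : ∑ i, c i • b i = 0 := by
      have := LinearMap.mem_ker.mp hc
      rwa [show f c = ∑ i, c i • b i from Fintype.linearCombination_apply R b c] at this
    have hmk0 : ∀ i, Ideal.Quotient.mk I (c i) = 0 := by
      apply Fintype.linearIndependent_iff.mp b'.linearIndependent
        (fun i => Ideal.Quotient.mk I (c i))
      have : ∀ i, Ideal.Quotient.mk I (c i) • b' i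
          = Submodule.mkQ (a • (⊤ : Submodule R M)) (c i • b i) := by
        intro i
        rw [mk_smul, map_smul, Submodule.mkQ_apply, hb]
      simp_rw [this]
      rw [← map_sum, h0, map_zero]
    choose d hd using fun i =>
      Ideal.mem_span_singleton'.mp (Ideal.Quotient.eq_zero_iff_mem.mp (hmk0 i))
    have hcd : c = a • d := funext fun i => by
      rw [Pi.smul_apply, smul_eq_mul, mul_comm]; exact (hd i).symm
    have hdker : d ∈ LinearMap.ker f := by
      rw [LinearMap.mem_ker]
      apply hreg
      show a • f d = a • 0
      rw [smul_zero, ← map_smul, ← hcd]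
      show f c = 0
      rw [show f c = ∑ i, c i • b i from Fintype.linearCombination_apply R b c, h0]
    rw [hcd]
    exact Submodule.smul_mem_smul ha hdker
  exact Module.Free.of_equiv (LinearEquiv.ofBijective f ⟨LinearMap.ker_eq_bot.mp hker, hsurj⟩)

end Lift

universe u v

lemma aux_free : ∀ (r : ℕ) (R : Type u), ∀ (_ : CommRing R) (_ : IsNoetherianRing R)
    (_ : IsLocalRing R) (x : Fin r → R)
    (_ : Ideal.span (Set.range x) = IsLocalRing.maximalIdeal R)
    (M : Type v) (_ : AddCommGroup M) (_ : Module R M) (_ : Module.Finite R M),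
    RingTheory.Sequence.IsRegular M (List.ofFn x) → Module.Free R M := by
  intro r
  induction r with
  | zero =>
    intro R _ _ _ x hx M _ _ _ hreg
    have hbot : IsLocalRing.maximalIdeal R = ⊥ := by
      rw [← hx, Set.range_eq_empty x, Ideal.span_empty]
    haveI : Module.FinitePresentation R M := Module.finitePresentation_of_finite R M
    apply Module.free_of_maximalIdeal_rTensor_injective
    haveI : Subsingleton (IsLocalRing.maximalIdeal R) := by
      rw [hbot]; infer_instance
    haveI : Subsingleton ((IsLocalRing.maximalIdeal R) ⊗[R] M) := by
      infer_instance
    exact Function.injective_of_subsingleton _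
  | succ r IH =>
    intro R _ _ _ x hx M _ _ _ hreg
    set a := x 0 with ha_def
    have ha : a ∈ IsLocalRing.maximalIdeal R := by
      rw [← hx]; exact Submodule.subset_span ⟨0, rfl⟩
    set I : Ideal R := Ideal.span {a} with hI
    rw [List.ofFn_succ] at hreg
    obtain ⟨h1, h2⟩ := (RingTheory.Sequence.isRegular_cons_iff' M _ _).mp hreg
    rw [List.map_ofFn] at h2
    -- set up the quotient ring
    have hIne : I ≠ ⊤ := by
      intro h
      have : a ∈ IsLocalRing.maximalIdeal R := ha
      exact (IsLocalRing.maximalIdeal.isMaximal R).ne_top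
        (top_le_iff.mp (h ▸ Ideal.span_le.mpr (Set.singleton_subset_iff.mpr ha) : (⊤:Ideal R) ≤ _))
    haveI : Nontrivial (R ⧸ I) := Ideal.Quotient.nontrivial_iff.mpr hIne
    haveI : IsLocalRing (R ⧸ I) :=
      IsLocalRing.of_surjective' (Ideal.Quotient.mk I) Ideal.Quotient.mk_surjective
    -- maximal ideal of quotient
    have hmax : Ideal.map (Ideal.Quotient.mk I) (IsLocalRing.maximalIdeal R)
        = IsLocalRing.maximalIdeal (R ⧸ I) := by
      have h1' : Ideal.comap (Ideal.Quotient.mk I) (IsLocalRing.maximalIdeal (R ⧸ I))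
          = IsLocalRing.maximalIdeal R :=
        IsLocalRing.eq_maximalIdeal
          (Ideal.comap_isMaximal_of_surjective _ Ideal.Quotient.mk_surjective)
      rw [← h1', Ideal.map_comap_of_surjective _ Ideal.Quotient.mk_surjective]
    -- span of images
    have hx' : Ideal.span (Set.range (fun i : Fin r => Ideal.Quotient.mk I (x i.succ)))
        = IsLocalRing.maximalIdeal (R ⧸ I) := by
      rw [← hmax, ← hx]
      have hrange : Set.range x = {a} ∪ Set.range (x ∘ Fin.succ) := by
        ext y
        constructor
        · rintro ⟨i, rfl⟩
          rcases Fin.eq_zero_or_eq_succ i with h | ⟨j, rfl⟩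
          · left; rw [h]; rfl
          · right; exact ⟨j, rfl⟩
        · rintro (h | ⟨j, rfl⟩)
          · exact ⟨0, h.symm⟩
          · exact ⟨j.succ, rfl⟩
      rw [hrange, Ideal.span_union, Ideal.map_sup]
      have hmapa : Ideal.map (Ideal.Quotient.mk I) (Ideal.span {a}) = ⊥ := by
        rw [Ideal.map_span, Set.image_singleton, Ideal.Quotient.eq_zero_iff_mem.mpr
          (Ideal.subset_span rfl : a ∈ I), Ideal.span_singleton_eq_bot.mpr rfl]
      rw [hmapa, bot_sup_eq, Ideal.map_span, ← Set.range_comp]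
      rfl
    -- module instances over the quotient
    haveI htower : IsScalarTower R (R ⧸ I) (QuotSMulTop a M) :=
      Module.IsTorsionBySet.isScalarTower _
    haveI : Module.Finite R (QuotSMulTop a M) :=
      Module.Finite.of_surjective (Submodule.mkQ _) (Submodule.Quotient.mk_surjective _)
    haveI hfin : Module.Finite (R ⧸ I) (QuotSMulTop a M) :=
      Module.Finite.of_restrictScalars_finite R _ _
    -- apply inductive hypothesis
    haveI : IsNoetherianRing (R ⧸ I) := inferInstance
    haveI hfree : Module.Free (R ⧸ I) (QuotSMulTop a M) :=
      IH (R ⧸ I) inferInstance inferInstance inferInstance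
        (fun i : Fin r => Ideal.Quotient.mk I (x i.succ)) hx'
        (QuotSMulTop a M) inferInstance inferInstance inferInstance (by exact h2)
    exact free_lift a ha h1

/-- If `R` is a regular local ring of dimension `r` with regular system of parameters
`x 0, …, x (r-1)` and `M` is a finitely generated `R`-module on which `x` is a regular
sequence, then `M` is flat over `R`. -/
theorem stmt_1 {R : Type*} [CommRing R] [IsNoetherianRing R] [IsLocalRing R]
    (r : ℕ) (hdim : ringKrullDim R = r)
    (x : Fin r → R)
    (hx : Ideal.span (Set.range x) = IsLocalRing.maximalIdeal R)
    (M : Type*) [AddCommGroup M] [Module R M] [Module.Finite R M]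
    (hreg : RingTheory.Sequence.IsRegular M (List.ofFn x)) :
    Module.Flat R M := by
  haveI : Module.Free R M := aux_free r R inferInstance inferInstance inferInstance x hx M inferInstance inferInstance inferInstance hreg
  infer_instance
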